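/- arXiv:2301.02158 — 2 statements merged into one kernel-verified Lean document; each statement's English description precedes it below -/
import Mathlib

section
/- Let c ∈ (0,1) and 0 < α < c/(1−c). Then the minimum p₀ ∈ [0,1] such that c/k + p₀(1+α(k−1)) − 1 ≥ 0 for all k ∈ [1, k_max] (with k_max = 1 + α⁻¹(p₀⁻¹−1)) equals (√(cα) − √(cα − α + 1))²/(α−1)² for α ≠ 1, and the unconstrained minimizer of g over k is k* = √(c/(p₀α)). -/
private lemma amgm (a b k : ℝ) (ha : 0 ≤ a) (hb : 0 ≤ b) (hk : 0 < k) :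
    2 * Real.sqrt (a * b) ≤ a / k + b * k := by
  have h1 : Real.sqrt (a / k) ^ 2 = a / k := Real.sq_sqrt (by positivity)
  have h2 : Real.sqrt (b * k) ^ 2 = b * k := Real.sq_sqrt (by positivity)
  have h3 : Real.sqrt (a / k) * Real.sqrt (b * k) = Real.sqrt (a * b) := by
    rw [← Real.sqrt_mul (by positivity)]
    congr 1
    field_simp
  nlinarith [sq_nonneg (Real.sqrt (a / k) - Real.sqrt (b * k))]

private lemma eq_of_sq_eq {a b : ℝ} (ha : 0 ≤ a) (hb : 0 ≤ b) (h : a ^ 2 = b ^ 2) :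
    a = b := by
  rw [← Real.sqrt_sq ha, h, Real.sqrt_sq hb]

set_option maxHeartbeats 1600000 in
/-- Erasure channel with linear scale-dependent noise, `0 < α < c/(1-c)`,
`α ≠ 1`: the threshold (the least `p₀ ∈ [0,1]` making
`g(k) = c/k + p₀(1+α(k-1)) - 1` nonnegative on `[1, k_max]`) equals
`(√(cα) − √(cα − α + 1))²/(α−1)²`, and for each `p₀ > 0` the unconstrained
minimizer of `g` over `k > 0` is `k* = √(c/(p₀α))`. -/
theorem erasure_linear_threshold_small_alpha (c α : ℝ)
    (hc : c ∈ Set.Ioo (0:ℝ) 1) (hα : 0 < α) (hαc : α < c / (1 - c))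
    (hα1 : α ≠ 1) :
    IsLeast {p₀ : ℝ | p₀ ∈ Set.Icc (0:ℝ) 1 ∧
      ∀ k : ℝ, 1 ≤ k → p₀ * (1 + α * (k - 1)) ≤ 1 →
        c / k + p₀ * (1 + α * (k - 1)) - 1 ≥ 0}
      ((Real.sqrt (c * α) - Real.sqrt (c * α - α + 1)) ^ 2 / (α - 1) ^ 2) ∧
    (∀ p₀ : ℝ, 0 < p₀ → ∀ k : ℝ, 0 < k →
      c / Real.sqrt (c / (p₀ * α)) +
        p₀ * (1 + α * (Real.sqrt (c / (p₀ * α)) - 1)) - 1 ≤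
      c / k + p₀ * (1 + α * (k - 1)) - 1) := by
  obtain ⟨hc0, hc1⟩ := hc
  have h1c : 0 < 1 - c := by linarith
  have hαc' : α * (1 - c) < c := by
    have := (lt_div_iff₀ h1c).mp hαc
    linarith
  set s := Real.sqrt (c * α) with hs_def
  set t := Real.sqrt (c * α - α + 1) with ht_def
  have hca : 0 < c * α := by positivity
  have hden : 0 < c * α - α + 1 := by nlinarith
  have hs2 : s ^ 2 = c * α := Real.sq_sqrt hca.le
  have ht2 : t ^ 2 = c * α - α + 1 := Real.sq_sqrt hden.le
  have hs : 0 < s := Real.sqrt_pos.mpr hca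
  have ht : 0 < t := Real.sqrt_pos.mpr hden
  have hstpos : 0 < s + t := by linarith
  have hfact : α - 1 = (s - t) * (s + t) := by linear_combination ht2 - hs2
  have hsmt : s - t ≠ 0 := by
    intro h
    apply hα1
    have : α - 1 = 0 := by rw [hfact, h]; ring
    linarith
  have hP : (s - t) ^ 2 / (α - 1) ^ 2 = 1 / (s + t) ^ 2 := by
    rw [hfact]
    rw [mul_pow]
    rw [div_mul_eq_div_div]
    rw [div_self (pow_ne_zero 2 hsmt)]
  have hst2 : (s * t) ^ 2 = (c * α) * (c * α - α + 1) := by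
    rw [mul_pow, hs2, ht2]
  have hsum1 : 1 ≤ (s + t) ^ 2 := by
    rcases le_or_gt c (1/2) with h | h
    · have h2c : α < 2 * c := by
        have : c / (1 - c) ≤ 2 * c := by
          rw [div_le_iff₀ h1c]; nlinarith
        linarith
      have key : (2*(s*t) - α*(1-2*c)) * (2*(s*t) + α*(1-2*c)) = α*(4*c-α) := by
        linear_combination 4 * hst2
      have hB : 0 < 2*(s*t) + α*(1-2*c) := by nlinarith [mul_pos hs ht]
      have hA : 0 ≤ 2*(s*t) - α*(1-2*c) := by
        nlinarith [key, hB, mul_pos hα (show (0:ℝ) < 4*c - α by linarith)]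
      nlinarith [hs2, ht2, hA]
    · nlinarith [mul_pos hs ht, hs2, ht2, mul_pos hα (show (0:ℝ) < 2*c - 1 by linarith)]
  have hconst : (1/(s+t)^2) * (1-α) - 1 = -(2*s/(s+t)) := by
    field_simp
    linear_combination -hfact
  -- the nonnegativity of g at the threshold, for all k > 0
  have hg : ∀ k : ℝ, 0 < k → 0 ≤ c/k + (1/(s+t)^2) * (1 + α*(k-1)) - 1 := by
    intro k hk
    have ham := amgm c ((1/(s+t)^2) * α) k hc0.le (by positivity) hk
    have hsqrtval : Real.sqrt (c * ((1/(s+t)^2) * α)) = s/(s+t) := by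
      apply eq_of_sq_eq (Real.sqrt_nonneg _) (by positivity)
      rw [Real.sq_sqrt (by positivity), div_pow, hs2]
      field_simp
    rw [hsqrtval] at ham
    have expand : c/k + (1/(s+t)^2) * (1 + α*(k-1)) - 1
        = (c/k + (1/(s+t)^2)*α*k) + ((1/(s+t)^2) * (1-α) - 1) := by ring
    rw [expand, hconst]
    ring_nf at ham ⊢
    linarith [ham]
  -- the critical point k₀
  set w := Real.sqrt (c / α) with hw_def
  have hw2 : w ^ 2 = c / α := Real.sq_sqrt (by positivity)
  have hw : 0 < w := Real.sqrt_pos.mpr (by positivity)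
  have hws : w * s = c := by
    apply eq_of_sq_eq (by positivity) hc0.le
    rw [mul_pow, hw2, hs2]
    field_simp
  have hαw : α * w = s := by
    apply eq_of_sq_eq (by positivity) hs.le
    rw [mul_pow, hw2, hs2]
    field_simp
  have hk0pos : 0 < (s+t)*w := mul_pos hstpos hw
  have hck0 : c / ((s+t)*w) = s/(s+t) := by
    rw [← hws, mul_comm (s+t) w, mul_div_mul_left _ _ (ne_of_gt hw)]
  have hPk0 : (1/(s+t)^2) * α * ((s+t)*w) = s/(s+t) := by
    have h2 : (s+t)/(s+t)^2 = 1/(s+t) := by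
      rw [sq, div_mul_eq_div_div, div_self hstpos.ne']
    calc (1/(s+t)^2) * α * ((s+t)*w) = (α*w) * ((s+t)/(s+t)^2) := by ring
    _ = s * (1/(s+t)) := by rw [hαw, h2]
    _ = s/(s+t) := by rw [mul_one_div]
  have htw2 : (t*w)^2 = (c*α - α + 1) * (c/α) := by rw [mul_pow, ht2, hw2]
  have hcα2 : 1 - c < c/α := by
    rw [lt_div_iff₀ hα]; nlinarith
  have htw : 1 - c < t*w := by
    nlinarith [htw2, mul_pos ht hw, hcα2, h1c]
  have hk01 : 1 < (s+t)*w := by nlinarith [htw, hws]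
  have heq : c/((s+t)*w) + (1/(s+t)^2) * (1 + α*((s+t)*w - 1)) - 1 = 0 := by
    linear_combination hck0 + hPk0 + hconst
  have hfacpos : 0 < 1 + α*((s+t)*w - 1) := by nlinarith [hk01, hα]
  rw [hP]
  constructor
  · constructor
    · refine ⟨⟨by positivity, ?_⟩, fun k hk _ => hg k (by linarith)⟩
      rw [div_le_one (by positivity)]
      exact hsum1
    · rintro p₀ ⟨⟨hp0, hp1⟩, H⟩
      by_contra hlt
      push_neg at hlt
      have hmul : p₀ * (1 + α*((s+t)*w - 1)) < (1/(s+t)^2) * (1 + α*((s+t)*w - 1)) :=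
        mul_lt_mul_of_pos_right hlt hfacpos
      have hcon : p₀ * (1 + α*((s+t)*w - 1)) ≤ 1 := by
        have hck0pos : 0 < c/((s+t)*w) := by positivity
        linarith [heq, hmul, hck0pos]
      have hH := H ((s+t)*w) hk01.le hcon
      linarith [hH, heq, hmul]
  · intro p₀ hp₀ k hk
    set m := Real.sqrt (c / (p₀ * α)) with hm_def
    have hm2 : m ^ 2 = c / (p₀ * α) := Real.sq_sqrt (by positivity)
    have hm : 0 < m := Real.sqrt_pos.mpr (by positivity)
    have h1 : c / m = p₀ * α * m := by
      have hc' : p₀ * α * m ^ 2 = c := by rw [hm2]; field_simp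
      rw [div_eq_iff hm.ne']
      linear_combination -hc'
    have h2 : p₀ * α * m = Real.sqrt (c * (p₀ * α)) := by
      apply eq_of_sq_eq (by positivity) (Real.sqrt_nonneg _)
      rw [Real.sq_sqrt (by positivity), mul_pow, hm2]
      field_simp
    have ham := amgm c (p₀ * α) k hc0.le (by positivity) hk
    ring_nf at ham h1 h2 ⊢
    linarith [ham, h1, h2]
end

section
/- Let c ∈ (0,1) and γ ≥ c/(1−c). Then the minimum p₀ ∈ [0,1] such that c/k + p₀k^γ − 1 ≥ 0 for all k ∈ [1, p₀^{−1/γ}] equals 1−c. -/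
/-- Erasure channel with power-law scale-dependent noise `p(k) = p₀ k^γ`:
if `γ ≥ c/(1-c)`, the minimum `p₀ ∈ [0,1]` such that
`c/k + p₀ k^γ - 1 ≥ 0` for all `k ∈ [1, p₀^{-1/γ}]` (i.e. all `k ≥ 1` with
`p₀ k^γ ≤ 1`) equals `1 - c`. -/
theorem erasure_powerlaw_threshold_large_gamma (c γ : ℝ)
    (hc : c ∈ Set.Ioo (0:ℝ) 1) (hγ : γ ≥ c / (1 - c)) :
    IsLeast {p₀ : ℝ | p₀ ∈ Set.Icc (0:ℝ) 1 ∧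
      ∀ k : ℝ, 1 ≤ k → p₀ * k ^ γ ≤ 1 →
        c / k + p₀ * k ^ γ - 1 ≥ 0} (1 - c) := by
  obtain ⟨hc0, hc1⟩ := hc
  have h1c : (0:ℝ) < 1 - c := by linarith
  constructor
  · refine ⟨⟨by linarith, by linarith⟩, ?_⟩
    intro k hk _
    have hk0 : (0:ℝ) < k := lt_of_lt_of_le one_pos hk
    -- Bernoulli: 1 + p*(k-1) ≤ k^p with p = 1/(1-c) ≥ 1
    have hp1 : (1:ℝ) ≤ 1 / (1 - c) := by
      rw [le_div_iff₀ h1c]; linarith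
    have hbern := one_add_mul_self_le_rpow_one_add (s := k - 1)
      (by linarith) (p := 1 / (1 - c)) hp1
    rw [show (1 : ℝ) + (k - 1) = k by ring] at hbern
    have hsplit : k ^ (1 / (1 - c)) = k ^ (c / (1 - c)) * k := by
      have he : 1 / (1 - c) = c / (1 - c) + 1 := by field_simp; ring
      rw [he, Real.rpow_add hk0, Real.rpow_one]
    have hexp : k ^ (c / (1 - c)) ≤ k ^ γ :=
      Real.rpow_le_rpow_of_exponent_le hk hγ
    have hkc : (0:ℝ) < k ^ (c / (1 - c)) := Real.rpow_pos_of_pos hk0 _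
    -- main inequality: k ≤ c + (1-c) * (k^γ * k)
    have main : k ≤ c + (1 - c) * (k ^ γ * k) := by
      have h2 : (1 - c) * (k ^ (1 / (1 - c))) ≥ (1 - c) * (1 + (1 / (1 - c)) * (k - 1)) :=
        mul_le_mul_of_nonneg_left hbern (le_of_lt h1c)
      have h3 : (1 - c) * (1 + (1 / (1 - c)) * (k - 1)) = (1 - c) + (k - 1) := by
        field_simp
      have h4 : (1 - c) * (k ^ (c / (1 - c)) * k) ≤ (1 - c) * (k ^ γ * k) := by
        apply mul_le_mul_of_nonneg_left _ (le_of_lt h1c)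
        exact mul_le_mul_of_nonneg_right hexp (le_of_lt hk0)
      rw [hsplit] at h2
      linarith
    have hck : c / k * k = c := div_mul_cancel₀ c hk0.ne'
    rw [ge_iff_le, sub_nonneg]
    nlinarith [main, hck, hk0]
  · rintro p₀ ⟨⟨hp0, hp1⟩, hall⟩
    have h := hall 1 le_rfl (by simp [Real.one_rpow]; exact hp1)
    simp [Real.one_rpow] at h
    linarith
end
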